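/- Let Y = {x ∈ ℝⁿ : ∃u ∈ ℝᵏ, Bx + Cu ≥ c} be the projection of a polyhedron, and let 𝒫 = {z ∈ ℝ^{n+1} : ∃u ∈ ℝᵏ, ∃x ∈ ℝⁿ, z ≥ (x, −⟨e, x⟩) and Bx + Cu ≥ c} be the upper image of the associated multiple objective linear program with objectives (x, −⟨e,x⟩). Let Q = {(x, −⟨e,x⟩) : x ∈ Y}. Then 𝒫 = Q + ℝ₊^{n+1} and Q = 𝒫 ∩ {z ∈ ℝ^{n+1} : ⟨e', z⟩ = 0}, where e' is the all-ones vector in ℝ^{n+1}; consequently, Y = {(z₁,…,z_n) : z ∈ 𝒫, z₁ + ⋯ + z_{n+1} = 0}. -/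
import Mathlib


open Matrix Set

/-- For the projection `Y` of a polyhedron and the upper image `𝒫` of the associated
MOLP with objective map `x ↦ (x, −⟨e,x⟩)` (points of `ℝ^{n+1}` written as pairs
`(z₁,…,zₙ) × z_{n+1}`): `𝒫 = Q + ℝ₊^{n+1}`, `Q = 𝒫 ∩ {z : ⟨e',z⟩ = 0}`, and `Y` is
recovered from `𝒫` by intersecting with this hyperplane and projecting. -/
theorem stmt18 {n m k : ℕ} (B : Matrix (Fin m) (Fin n) ℝ)
    (C : Matrix (Fin m) (Fin k) ℝ) (c : Fin m → ℝ)
    (Y : Set (Fin n → ℝ)) (hY : Y = {x | ∃ u : Fin k → ℝ, c ≤ B *ᵥ x + C *ᵥ u})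
    (P : Set ((Fin n → ℝ) × ℝ))
    (hP : P = {z | ∃ (u : Fin k → ℝ) (x : Fin n → ℝ),
      c ≤ B *ᵥ x + C *ᵥ u ∧ x ≤ z.1 ∧ -(∑ i, x i) ≤ z.2})
    (Q : Set ((Fin n → ℝ) × ℝ))
    (hQ : Q = {z | ∃ x ∈ Y, z = (x, -(∑ i, x i))}) :
    P = {z | ∃ q ∈ Q, ∃ w : (Fin n → ℝ) × ℝ, 0 ≤ w.1 ∧ 0 ≤ w.2 ∧ z = q + w} ∧
    Q = P ∩ {z | (∑ i, z.1 i) + z.2 = 0} ∧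
    Y = Prod.fst '' (P ∩ {z | (∑ i, z.1 i) + z.2 = 0}) := by
  have h1 : P = {z | ∃ q ∈ Q, ∃ w : (Fin n → ℝ) × ℝ, 0 ≤ w.1 ∧ 0 ≤ w.2 ∧ z = q + w} := by
    subst hY hP hQ
    ext z
    constructor
    · rintro ⟨u, x, hc, hx1, hx2⟩
      refine ⟨(x, -(∑ i, x i)), ⟨x, ⟨u, hc⟩, rfl⟩, (z.1 - x, z.2 + ∑ i, x i),
        ?_, by simp; linarith, ?_⟩
      · intro i; simpa using hx1 i
      · ext <;> simp
    · rintro ⟨q, ⟨x, ⟨u, hc⟩, rfl⟩, w, hw1, hw2, rfl⟩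
      refine ⟨u, x, hc, ?_, ?_⟩
      · intro i; simpa using hw1 i
      · simpa using hw2
  have h2 : Q = P ∩ {z | (∑ i, z.1 i) + z.2 = 0} := by
    subst hY hP hQ
    ext z
    constructor
    · rintro ⟨x, ⟨u, hc⟩, rfl⟩
      exact ⟨⟨u, x, hc, le_refl _, le_refl _⟩, by simp⟩
    · rintro ⟨⟨u, x, hc, hx1, hx2⟩, hz⟩
      have hs : ∑ i, z.1 i ≤ ∑ i, x i := by
        have : -(∑ i, x i) ≤ z.2 := hx2
        simp only [Set.mem_setOf_eq] at hz
        linarith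
      have heq : z.1 = x := by
        have hsum : ∑ i, x i = ∑ i, z.1 i :=
          le_antisymm (Finset.sum_le_sum fun i _ => hx1 i) hs
        funext i
        by_contra hne
        have hlt : x i < z.1 i := lt_of_le_of_ne (hx1 i) (Ne.symm hne)
        have : ∑ i, x i < ∑ i, z.1 i :=
          Finset.sum_lt_sum (fun j _ => hx1 j) ⟨i, Finset.mem_univ i, hlt⟩
        linarith
      refine ⟨x, ⟨u, hc⟩, ?_⟩
      simp only [Set.mem_setOf_eq] at hz
      have hsum : ∑ i, z.1 i = ∑ i, x i := by rw [heq]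
      rw [Prod.ext_iff]
      exact ⟨heq, by simp; linarith⟩
  refine ⟨h1, h2, ?_⟩
  rw [← h2, hQ, hY]
  ext x
  constructor
  · rintro ⟨u, hu⟩
    exact ⟨(x, -(∑ i, x i)), ⟨x, ⟨u, hu⟩, rfl⟩, rfl⟩
  · rintro ⟨z, ⟨y, hy, rfl⟩, rfl⟩
    exact hy
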